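/- Let t = (t₁, t₂, t₃) be a unit vector with t₂ = t₁ (vw + u)/(uw − v) (i.e., E₃₃ = 0 in the Cayley parametrization with uw ≠ v), and let δ = u t₁ + v t₂ + w t₃ ≠ 0. Then the third component of the involution of Proposition 2, w' = (−t₃ − u t₂ + v t₁)/δ, equals −1/w. -/

import Mathlib

/-- if `t₂ = t₁(vw+u)/(uw−v)` (the condition `E₃₃ = 0` in the
Cayley parametrization) then the third component of the involution satisfies
`w' = −1/w`. -/
theorem stmt17 (t : Fin 3 → ℝ) (u v w : ℝ)
    (ht : t 0 ^ 2 + t 1 ^ 2 + t 2 ^ 2 = 1)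
    (huv : u * w ≠ v)
    (ht2 : t 1 = t 0 * (v * w + u) / (u * w - v))
    (hδ : u * t 0 + v * t 1 + w * t 2 ≠ 0)
    (hw : w ≠ 0) :
    (-t 2 - u * t 1 + v * t 0) / (u * t 0 + v * t 1 + w * t 2) = -1 / w := by
  have hd : u * w - v ≠ 0 := sub_ne_zero.mpr huv
  rw [div_eq_div_iff hδ hw]
  rw [eq_div_iff hd] at ht2
  linear_combination -ht2
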